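/- Let gcd(q, n) = 1, let g be a monic divisor of xⁿ − 1 over F_q with f(x) = (xⁿ−1)/g(x), and let e_g be the idempotent e_g(x) = −(1/n)·[((g*)′)*]·f(x) of F_q[x]/(xⁿ−1). Then for any root α of xⁿ − 1 in an extension field: e_g(α) = 1 if g(α) = 0, and e_g(α) = 0 if f(α) = 0. -/

import Mathlib

open Polynomial

/-- The idempotent `e_g(x) = -(1/n)·[((g*)′)*]·((xⁿ-1)/g)` attached to a monic divisor
`g` of `xⁿ - 1`, as a polynomial. -/
noncomputable def eIdem (F : Type*) [Field F] (n : ℕ) (g : Polynomial F) : Polynomial F :=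
  C (-(n : F)⁻¹) *
    reflect (g.natDegree - 1) (derivative (reflect g.natDegree g)) *
    ((X ^ n - 1) /ₘ g)

lemma reflect_deriv_reflect {F : Type*} [Field F] (g : Polynomial F) :
    reflect (g.natDegree - 1) (derivative (reflect g.natDegree g)) =
      C (g.natDegree : F) * g - X * derivative g := by
  rcases Nat.eq_zero_or_pos g.natDegree with h0 | hd
  · obtain ⟨c, rfl⟩ := Polynomial.natDegree_eq_zero.mp h0
    simp
  ext i
  rw [coeff_reflect]
  rcases le_or_gt i (g.natDegree - 1) with hi | hi
  · rw [revAt_le hi, coeff_derivative, coeff_reflect,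
      revAt_le (show g.natDegree - 1 - i + 1 ≤ g.natDegree by omega),
      show g.natDegree - (g.natDegree - 1 - i + 1) = i by omega,
      coeff_sub, coeff_C_mul]
    rcases Nat.eq_zero_or_pos i with rfl | hi0
    · have h2 : (X * derivative g).coeff 0 = 0 := by simp [mul_coeff_zero]
      rw [h2]
      rw [show ((g.natDegree - 1 - 0 : ℕ) : F) = (g.natDegree : F) - 1 by
        rw [Nat.sub_zero, Nat.cast_sub hd]; norm_num]
      ring
    · obtain ⟨j, rfl⟩ : ∃ j, i = j + 1 := ⟨i - 1, by omega⟩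
      rw [coeff_X_mul, coeff_derivative]
      rw [show ((g.natDegree - 1 - (j + 1) : ℕ) : F) = (g.natDegree : F) - ((j : F) + 2) by
        rw [show g.natDegree - 1 - (j + 1) = g.natDegree - (j + 2) by omega,
          Nat.cast_sub (by omega)]; push_cast; ring]
      ring
  · rw [revAt_eq_self_of_lt hi, coeff_derivative, coeff_reflect,
      revAt_eq_self_of_lt (show g.natDegree < i + 1 by omega),
      coeff_eq_zero_of_natDegree_lt (show g.natDegree < i + 1 by omega),
      coeff_sub, coeff_C_mul]
    obtain ⟨j, rfl⟩ : ∃ j, i = j + 1 := ⟨i - 1, by omega⟩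
    rw [coeff_X_mul, coeff_derivative]
    rcases lt_or_eq_of_le (show g.natDegree ≤ j + 1 by omega) with h | h
    · rw [coeff_eq_zero_of_natDegree_lt h]
      ring
    · rw [show ((g.natDegree : F)) = (j : F) + 1 by rw [h]; push_cast; ring]
      ring

/-- At a root `α` of `xⁿ - 1` in an extension field, `e_g(α) = 1` if `g(α) = 0` and
`e_g(α) = 0` if `f(α) = 0`, where `f = (xⁿ-1)/g`. -/
theorem stmt_10 (F : Type*) [Field F] [Fintype F] (n : ℕ) (hn : 0 < n)
    (hq : Nat.Coprime (Fintype.card F) n)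
    (g : Polynomial F) (hg : g.Monic) (hdvd : g ∣ X ^ n - 1)
    (K : Type*) [Field K] [Algebra F K] (α : K) (hα : α ^ n = 1) :
    (aeval α g = 0 → aeval α (eIdem F n g) = 1) ∧
    (aeval α ((X ^ n - 1 : Polynomial F) /ₘ g) = 0 → aeval α (eIdem F n g) = 0) := by
  set f := ((X ^ n - 1 : Polynomial F) /ₘ g) with hf
  have hnF : (n : F) ≠ 0 := by
    intro h
    set p := ringChar F with hp
    have hpF : CharP F p := ringChar.charP F
    obtain ⟨m, hpp, hcard⟩ := FiniteField.card F p
    have hpn : p ∣ n := (CharP.cast_eq_zero_iff F p n).mp h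
    have hpc : p ∣ Fintype.card F := hcard ▸ dvd_pow_self p m.ne_zero
    have hthis := Nat.dvd_gcd hpc hpn
    rw [Nat.Coprime] at hq
    rw [hq] at hthis
    exact hpp.one_lt.ne' (Nat.dvd_one.mp hthis)
  have hfg : g * f = X ^ n - 1 := by
    have h0 : (X ^ n - 1 : Polynomial F) %ₘ g = 0 :=
      (modByMonic_eq_zero_iff_dvd hg).mpr hdvd
    have := modByMonic_add_div (X ^ n - 1 : Polynomial F) g
    rw [h0, zero_add] at this
    exact this
  have hkey : aeval α (derivative g) * aeval α f + aeval α g * aeval α (derivative f)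
      = (n : K) * α ^ (n - 1) := by
    have hD : derivative (g * f) = C (n : F) * X ^ (n - 1) := by
      rw [hfg]
      simp [derivative_X_pow]
    rw [derivative_mul] at hD
    have := congrArg (aeval α) hD
    simpa [mul_comm] using this
  have heval : aeval α (eIdem F n g) =
      algebraMap F K (-(n : F)⁻¹) *
        ((g.natDegree : K) * aeval α g - α * aeval α (derivative g)) * aeval α f := by
    rw [eIdem, reflect_deriv_reflect]
    simp [aeval_def, ← hf]
  constructor
  · intro hga
    have hk : aeval α (derivative g) * aeval α f = (n : K) * α ^ (n - 1) := by
      rw [← hkey, hga]; ring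
    rw [heval, hga]
    have : algebraMap F K (-(n : F)⁻¹) * ((g.natDegree : K) * 0 - α * aeval α (derivative g)) *
        aeval α f = algebraMap F K ((n : F)⁻¹) * (n : K) * (α * α ^ (n - 1)) := by
      rw [map_neg]
      rw [mul_assoc, mul_assoc]
      rw [show ((g.natDegree : K) * 0 - α * aeval α (derivative g)) *
          aeval α f = -(α * (aeval α (derivative g) * aeval α f)) by ring, hk]
      ring
    rw [this]
    have hα0 : α * α ^ (n - 1) = 1 := by
      rw [← pow_succ', Nat.sub_add_cancel hn, hα]
    rw [hα0, mul_one]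
    rw [show ((n : K)) = algebraMap F K (n : F) by simp, ← map_mul,
      inv_mul_cancel₀ hnF, map_one]
  · intro hfa
    rw [heval, hfa, mul_zero]
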